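/- For every prime p and every integer n ≥ 1 there exists a finite abelian p-group A of cardinality exactly p^{⌊n(1+log n)⌋} (log the natural logarithm, ⌊·⌋ the floor) such that every finite abelian group B of p-power order with |B| ≤ p^n is isomorphic to a subgroup of A. (One may take A = ⊕_{i=1}^{n} ℤ/p^{⌊n/i⌋}ℤ.) -/

import Mathlib

open Finset

noncomputable def zmodEmb (a b : ℕ) (hab : a ∣ b) : ZMod a →+ ZMod b :=
  ZMod.lift a ⟨(zmultiplesHom (ZMod b)) ((b / a : ℕ) : ZMod b), by
    simp only [zmultiplesHom_apply]
    rw [zsmul_eq_mul]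
    push_cast
    rw [← Nat.cast_mul, Nat.mul_div_cancel' hab, ZMod.natCast_self]⟩

theorem zmodEmb_injective (a b : ℕ) (hab : a ∣ b) (ha : a ≠ 0) (hb : b ≠ 0) :
    Function.Injective (zmodEmb a b hab) := by
  haveI : NeZero a := ⟨ha⟩
  haveI : NeZero b := ⟨hb⟩
  rw [injective_iff_map_eq_zero]
  intro x hx
  have hx' : (zmodEmb a b hab) ((x.val : ℤ) : ZMod a) = 0 := by
    rwa [Int.cast_natCast, ZMod.natCast_val, ZMod.cast_id]
  rw [zmodEmb, ZMod.lift_coe] at hx'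
  simp only [zmultiplesHom_apply, zsmul_eq_mul, Int.cast_natCast] at hx'
  rw [← Nat.cast_mul, ZMod.natCast_eq_zero_iff] at hx'
  have hba : 0 < b / a := Nat.div_pos (Nat.le_of_dvd (Nat.pos_of_ne_zero hb) hab)
    (Nat.pos_of_ne_zero ha)
  have hdvd : a ∣ x.val := by
    have h1 : a * (b / a) ∣ x.val * (b / a) := by rwa [Nat.mul_div_cancel' hab]
    exact (Nat.mul_dvd_mul_iff_right hba).1 h1
  have hv : x.val = 0 := Nat.eq_zero_of_dvd_of_lt hdvd (ZMod.val_lt x)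
  rwa [ZMod.val_eq_zero] at hv

theorem antitone_mul_le_sum {m : ℕ} (u : Fin m → ℕ) (hu : Antitone u) (k : Fin m) :
    (k.1 + 1) * u k ≤ ∑ j, u j := by
  have h1 : (Finset.Iic k).card * u k ≤ ∑ j ∈ Finset.Iic k, u j :=
    Finset.card_nsmul_le_sum _ _ _ (fun j hj => hu (Finset.mem_Iic.1 hj))
  have h2 : (Finset.Iic k).card = k.1 + 1 := by
    simp [Fin.card_Iic]
  calc (k.1 + 1) * u k ≤ ∑ j ∈ Finset.Iic k, u j := by rw [← h2]; exact h1
    _ ≤ ∑ j, u j := Finset.sum_le_sum_of_subset (Finset.subset_univ _)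

theorem sum_div_le_floor (n : ℕ) (hn : 1 ≤ n) :
    ∑ j : Fin n, n / (j.1 + 1) ≤ ⌊(n : ℝ) * (1 + Real.log n)⌋₊ := by
  apply Nat.le_floor
  push_cast
  calc (∑ j : Fin n, ((n / (j.1 + 1) : ℕ) : ℝ))
      ≤ ∑ j : Fin n, (n : ℝ) / (j.1 + 1) := by
        apply Finset.sum_le_sum
        intro j _
        exact Nat.cast_div_le.trans (by push_cast; exact le_rfl)
    _ = (n : ℝ) * ∑ j : Fin n, ((j.1 + 1 : ℝ))⁻¹ := by
        rw [Finset.mul_sum]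
        exact Finset.sum_congr rfl fun j _ => div_eq_mul_inv _ _
    _ = (n : ℝ) * (harmonic n : ℝ) := by
        congr 1
        rw [harmonic]
        push_cast
        rw [← Fin.sum_univ_eq_sum_range (fun i => ((i : ℝ) + 1)⁻¹) n]
    _ ≤ (n : ℝ) * (1 + Real.log n) := by
        apply mul_le_mul_of_nonneg_left (harmonic_le_one_add_log n) (by positivity)

noncomputable def piEmb {ι κ : Type} [Fintype ι] [DecidableEq ι] [DecidableEq κ]
    (f : ι → κ) (M : ι → Type) (N : κ → Type)
    [∀ i, AddCommGroup (M i)] [∀ j, AddCommGroup (N j)]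
    (c : ∀ i, M i →+ N (f i)) : (∀ i, M i) →+ ∀ j, N j :=
  ∑ i : ι, (AddMonoidHom.single N (f i)).comp ((c i).comp (Pi.evalAddMonoidHom M i))

theorem piEmb_injective {ι κ : Type} [Fintype ι] [DecidableEq ι] [DecidableEq κ]
    (f : ι → κ) (hf : Function.Injective f) (M : ι → Type) (N : κ → Type)
    [∀ i, AddCommGroup (M i)] [∀ j, AddCommGroup (N j)]
    (c : ∀ i, M i →+ N (f i)) (hc : ∀ i, Function.Injective (c i)) :
    Function.Injective (piEmb f M N c) := by
  rw [injective_iff_map_eq_zero]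
  intro x hx
  funext i
  have h1 : (piEmb f M N c) x (f i) = 0 := by rw [hx]; rfl
  rw [piEmb, AddMonoidHom.finset_sum_apply, Finset.sum_apply] at h1
  have h2 : ∀ i' : ι, ((AddMonoidHom.single N (f i')).comp
      ((c i').comp (Pi.evalAddMonoidHom M i'))) x (f i)
      = if i' = i then ((AddMonoidHom.single N (f i)).comp
      ((c i).comp (Pi.evalAddMonoidHom M i))) x (f i) else 0 := by
    intro i'
    split_ifs with h
    · subst h; rfl
    · simp only [AddMonoidHom.comp_apply, AddMonoidHom.single_apply]
      exact Pi.single_eq_of_ne (fun hc' : f i = f i' => h (hf hc').symm) ((c i') ((Pi.evalAddMonoidHom M i') x))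
  rw [Finset.sum_congr rfl (fun i' _ => h2 i'), Finset.sum_ite_eq' Finset.univ i,
    if_pos (Finset.mem_univ i)] at h1
  simp only [AddMonoidHom.comp_apply, AddMonoidHom.single_apply, Pi.single_eq_same] at h1
  exact (injective_iff_map_eq_zero (c i)).1 (hc i) _ h1

/-- For every prime `p` and every integer `n ≥ 1` there exists a finite abelian `p`-group `A`
of cardinality exactly `p ^ ⌊n * (1 + log n)⌋` such that every finite abelian group `B` of
`p`-power order with `|B| ≤ p ^ n` is isomorphic to a subgroup of `A` (i.e. embeds into `A`). -/
theorem exists_abelian_pGroup_containing_all (p n : ℕ) (hp : p.Prime) (hn : 1 ≤ n) :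
    ∃ (A : Type) (_ : CommGroup A) (_ : Finite A),
      Nat.card A = p ^ ⌊(n : ℝ) * (1 + Real.log n)⌋₊ ∧
      (∃ k : ℕ, Nat.card A = p ^ k) ∧
      ∀ (B : Type) (_ : CommGroup B) (_ : Finite B),
        (∃ k : ℕ, Nat.card B = p ^ k) → Nat.card B ≤ p ^ n →
        ∃ φ : B →* A, Function.Injective φ := by
  classical
  have hp0 : p ≠ 0 := hp.pos.ne'
  set T := ⌊(n : ℝ) * (1 + Real.log n)⌋₊ with hT
  set S := ∑ j : Fin n, n / (j.1 + 1) with hS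
  have hST : S ≤ T := sum_div_le_floor n hn
  set N : Fin n → Type := fun j => ZMod (p ^ (n / (j.1 + 1))) with hN
  haveI hNfin : ∀ j : Fin n, Fintype (N j) := fun j =>
    @ZMod.fintype _ ⟨pow_ne_zero _ hp0⟩
  set A₀ := ((∀ j : Fin n, N j) × ZMod (p ^ (T - S))) with hA₀
  haveI : NeZero (p ^ (T - S)) := ⟨pow_ne_zero _ hp0⟩
  haveI : Finite A₀ := by
    haveI : Finite (∀ j : Fin n, N j) := Pi.finite
    exact Finite.instProd
  refine ⟨Multiplicative A₀, inferInstance, inferInstance, ?_, ?_, ?_⟩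
  · -- cardinality
    show Nat.card A₀ = p ^ T
    rw [hA₀, Nat.card_prod, Nat.card_pi]
    have h1 : ∀ j : Fin n, Nat.card (N j) = p ^ (n / (j.1 + 1)) := fun j => Nat.card_zmod _
    rw [Finset.prod_congr rfl (fun j _ => h1 j), Finset.prod_pow_eq_pow_sum, Nat.card_zmod,
      ← pow_add, ← hS, Nat.add_sub_cancel' hST]
  · exact ⟨T, by
      show Nat.card A₀ = p ^ T
      rw [hA₀, Nat.card_prod, Nat.card_pi]
      have h1 : ∀ j : Fin n, Nat.card (N j) = p ^ (n / (j.1 + 1)) := fun j => Nat.card_zmod _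
      rw [Finset.prod_congr rfl (fun j _ => h1 j), Finset.prod_pow_eq_pow_sum, Nat.card_zmod,
        ← pow_add, ← hS, Nat.add_sub_cancel' hST]⟩
  · intro B instB finB hcard hle
    obtain ⟨k, hk⟩ := hcard
    obtain ⟨ι, hι, d, hd, ⟨eqv⟩⟩ :=
      AddCommGroup.equiv_directSum_zmod_of_finite' (Additive B)
    -- convert to Pi
    have eqv2 : Additive B ≃+ ∀ i : ι, ZMod (d i) :=
      eqv.trans (DirectSum.addEquivProd (fun i => ZMod (d i)))
    -- card of B
    have hcardB : Nat.card B = ∏ i : ι, d i := by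
      have : Nat.card (Additive B) = Nat.card (∀ i : ι, ZMod (d i)) := Nat.card_congr eqv2.toEquiv
      rw [Nat.card_pi] at this
      exact (Nat.card_congr Additive.ofMul).trans (by simpa [Nat.card_zmod] using this)
    -- each d i is a power of p
    have hdp : ∀ i : ι, ∃ e : ℕ, d i = p ^ e ∧ 1 ≤ e := by
      intro i
      have hdvd : d i ∣ p ^ k := by
        rw [← hk, hcardB]
        exact Finset.dvd_prod_of_mem d (Finset.mem_univ i)
      obtain ⟨e, _, he⟩ := (Nat.dvd_prime_pow hp).1 hdvd
      refine ⟨e, he, ?_⟩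
      by_contra h
      have he0 : e = 0 := by omega
      subst he0
      simp only [pow_zero] at he
      have := hd i
      omega
    choose e hde he1 using hdp
    -- sum of exponents is at most n
    have hsum : ∑ i : ι, e i ≤ n := by
      have h1 : p ^ (∑ i : ι, e i) ≤ p ^ n := by
        rw [← Finset.prod_pow_eq_pow_sum]
        calc ∏ i : ι, p ^ e i = ∏ i : ι, d i :=
              Finset.prod_congr rfl (fun i _ => (hde i).symm)
          _ = Nat.card B := hcardB.symm
          _ ≤ p ^ n := hle
      exact (Nat.pow_le_pow_iff_right hp.one_lt).1 h1
    set m := Fintype.card ι with hm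
    set h : Fin m ≃ ι := (Fintype.equivFin ι).symm with hh
    set v : Fin m → ℕ := fun kk => e (h kk) with hv
    set σ := Tuple.sort v with hσ
    set u : Fin m → ℕ := fun kk => (v ∘ σ) kk.rev with hu
    have hw : Monotone (v ∘ σ) := Tuple.monotone_sort v
    have huanti : Antitone u := fun a b hab => hw (Fin.rev_le_rev.2 hab)
    set pos : ι → Fin m := fun i => (σ.symm (h.symm i)).rev with hpos
    have hupos : ∀ i, u (pos i) = e i := by
      intro i
      show (v ∘ σ) (σ.symm (h.symm i)).rev.rev = e i
      rw [Fin.rev_rev]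
      simp [hv]
    have hsumu : ∑ kk : Fin m, u kk = ∑ i : ι, e i := by
      calc ∑ kk : Fin m, u kk = ∑ kk : Fin m, (v ∘ σ) (Fin.revPerm kk) := rfl
        _ = ∑ kk : Fin m, (v ∘ σ) kk := Equiv.sum_comp Fin.revPerm (v ∘ σ)
        _ = ∑ kk : Fin m, v (σ kk) := rfl
        _ = ∑ kk : Fin m, v kk := Equiv.sum_comp σ v
        _ = ∑ kk : Fin m, e (h kk) := rfl
        _ = ∑ i : ι, e i := Equiv.sum_comp h e
    have hposinj : Function.Injective pos := by
      intro a b hab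
      exact h.symm.injective (σ.symm.injective (Fin.rev_injective hab))
    have hmn : m ≤ n := by
      calc m = ∑ _i : ι, 1 := by simp [hm]
        _ ≤ ∑ i : ι, e i := Finset.sum_le_sum (fun i _ => he1 i)
        _ ≤ n := hsum
    set f : ι → Fin n := fun i => Fin.castLE hmn (pos i) with hf
    have hfinj : Function.Injective f := fun a b hab =>
      hposinj (Fin.castLE_injective hmn hab)
    have key : ∀ i, e i ≤ n / ((f i).1 + 1) := by
      intro i
      have h1 : ((pos i).1 + 1) * u (pos i) ≤ ∑ kk, u kk :=
        antitone_mul_le_sum u huanti (pos i)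
      rw [hupos i, hsumu] at h1
      have h2 : ((f i).1 + 1) * e i ≤ n := le_trans h1 hsum
      rw [Nat.le_div_iff_mul_le (by omega), mul_comm]
      exact h2
    have hdvd : ∀ i, d i ∣ p ^ (n / ((f i).1 + 1)) := by
      intro i
      rw [hde i]
      exact pow_dvd_pow p (key i)
    set c : ∀ i : ι, ZMod (d i) →+ N (f i) := fun i =>
      zmodEmb (d i) (p ^ (n / ((f i).1 + 1))) (hdvd i) with hc
    have hcinj : ∀ i, Function.Injective (c i) := fun i =>
      zmodEmb_injective _ _ (hdvd i) (by have := hd i; omega) (pow_ne_zero _ hp0)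
    set F : (∀ i : ι, ZMod (d i)) →+ (∀ j : Fin n, N j) :=
      piEmb f (fun i => ZMod (d i)) N c with hF
    have hFinj : Function.Injective F :=
      piEmb_injective f hfinj (fun i => ZMod (d i)) N c hcinj
    set ψ : Additive B →+ A₀ :=
      (AddMonoidHom.inl _ _).comp (F.comp eqv2.toAddMonoidHom) with hψ
    have hψinj : Function.Injective ψ := by
      apply Function.Injective.comp (g := AddMonoidHom.inl _ _)
      · intro x y hxy; exact congrArg Prod.fst hxy
      · exact hFinj.comp eqv2.injective
    refine ⟨AddMonoidHom.toMultiplicativeRight ψ, ?_⟩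
    rw [AddMonoidHom.coe_toMultiplicativeRight]
    exact (Multiplicative.ofAdd.injective.comp hψinj).comp Additive.ofMul.injective
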